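/- Let S¹ = ℝ/ℤ be the unit circle with its standard metric, let β₁ ∈ (0,1) be irrational, let β₂ = β₁ + 1/2 (mod 1), and let f_i : S¹ → S¹ be the rotations f_i(x) = x + β_i (mod 1) for i = 1, 2. Then the parameterized iterated function system F = {S¹; f₁, f₂} does not have the shadowing property on ℤ₊. -/

import Mathlib

/-- Orbit of the IFS `f` on `ℤ₊`. -/
def IsOrbitNat {X Λ : Type*} (f : Λ → X → X) (y : ℕ → X) : Prop :=
  ∃ σ : ℕ → Λ, ∀ n : ℕ, y (n + 1) = f (σ n) (y n)

/-- `δ`-pseudo orbit of the IFS `f` on `ℤ₊`. -/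
def IsPseudoOrbitNat {X Λ : Type*} [MetricSpace X] (f : Λ → X → X) (δ : ℝ)
    (x : ℕ → X) : Prop :=
  ∃ σ : ℕ → Λ, ∀ n : ℕ, dist (x (n + 1)) (f (σ n) (x n)) < δ

/-- Shadowing property on `ℤ₊`. -/
def ShadowingNat {X Λ : Type*} [MetricSpace X] (f : Λ → X → X) : Prop :=
  ∀ ε > (0 : ℝ), ∃ δ > (0 : ℝ), ∀ x : ℕ → X, IsPseudoOrbitNat f δ x →
    ∃ y : ℕ → X, IsOrbitNat f y ∧ ∀ n : ℕ, dist (x n) (y n) ≤ ε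

lemma intCast_coe_addCircle (k : ℤ) : (((k : ℝ)) : AddCircle (1:ℝ)) = 0 := by
  rw [AddCircle.coe_eq_zero_iff]
  exact ⟨k, by simp⟩

lemma norm_quarter : ‖((1/4 : ℝ) : AddCircle (1:ℝ))‖ = 1/4 := by
  rw [AddCircle.norm_eq]; norm_num [round_eq]

lemma norm_neg_quarter : ‖((-(1/4) : ℝ) : AddCircle (1:ℝ))‖ = 1/4 := by
  rw [AddCircle.norm_eq]; norm_num [round_eq]

lemma norm_coe_le_abs (r : ℝ) : ‖((r : ℝ) : AddCircle (1:ℝ))‖ ≤ |r| := by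
  simpa using (QuotientAddGroup.norm_mk_le_norm (S := AddSubgroup.zmultiples (1:ℝ)) (m := r))

/-- The IFS on the circle `ℝ/ℤ` generated by the two rotations by angles
`β 0 ∈ (0,1)` irrational and `β 1 = β 0 + 1/2 (mod 1)` does not have the shadowing
property on `ℤ₊`. -/
theorem not_shadowing_two_rotations_half_apart
    (β : Fin 2 → ℝ) (h0 : ∀ i, 0 < β i) (h1 : ∀ i, β i < 1)
    (hirr : Irrational (β 0))
    (hhalf : (β 1 : AddCircle (1 : ℝ)) =
      (β 0 : AddCircle (1 : ℝ)) + ((1 / 2 : ℝ) : AddCircle (1 : ℝ))) :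
    ¬ ShadowingNat
      (fun (i : Fin 2) (x : AddCircle (1 : ℝ)) => x + (β i : AddCircle (1 : ℝ))) := by
  intro hs
  obtain ⟨δ, hδ, H⟩ := hs (1/16) (by norm_num)
  -- choose N with 1/(4N) < δ
  obtain ⟨N, hN⟩ := exists_nat_gt (1 / (4 * δ))
  have hNpos : (0 : ℝ) < N := lt_trans (by positivity) hN
  have hsmall : 1 / (4 * N) < δ := by
    rw [div_lt_iff₀ (by positivity)] at *
    nlinarith
  -- the pseudo orbit
  set x : ℕ → AddCircle (1:ℝ) :=
    fun n => ((n * β 0 + n / (4 * N) : ℝ) : AddCircle (1:ℝ)) with hx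
  have hpseudo : IsPseudoOrbitNat
      (fun (i : Fin 2) (x : AddCircle (1 : ℝ)) => x + (β i : AddCircle (1 : ℝ))) δ x := by
    refine ⟨fun _ => 0, fun n => ?_⟩
    have : dist (x (n+1)) (x n + ((β 0 : ℝ) : AddCircle (1:ℝ)))
        = ‖((1 / (4 * N) : ℝ) : AddCircle (1:ℝ))‖ := by
      rw [dist_eq_norm]
      congr 1
      have hNne : (N:ℝ) ≠ 0 := ne_of_gt hNpos
      simp only [hx]
      rw [← AddCircle.coe_add, ← AddCircle.coe_sub]
      have hr : ((n:ℝ)+1) * β 0 + ((n:ℝ)+1) / (4 * N) - ((n:ℝ) * β 0 + (n:ℝ) / (4 * N) + β 0)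
          = 1 / (4 * (N:ℝ)) := by field_simp; ring
      push_cast
      rw [hr]
    simp only [this]
    calc ‖((1 / (4 * N) : ℝ) : AddCircle (1:ℝ))‖ ≤ |(1 / (4 * N) : ℝ)| := norm_coe_le_abs _
      _ = (1 / (4 * N) : ℝ) := abs_of_pos (by positivity)
      _ < δ := hsmall
  obtain ⟨y, ⟨σ, hσ⟩, hy⟩ := H x hpseudo
  -- structure of orbits
  have horb : ∀ n : ℕ, ∃ m : ℕ,
      y n = y 0 + ((n * β 0 + m / 2 : ℝ) : AddCircle (1:ℝ)) := by
    intro n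
    induction n with
    | zero => exact ⟨0, by simp⟩
    | succ n ih =>
      obtain ⟨m, hm⟩ := ih
      rw [hσ n, hm]
      have hcase : σ n = 0 ∨ σ n = 1 := by omega
      rcases hcase with h | h <;> rw [h]
      · refine ⟨m, ?_⟩
        simp only [Fin.isValue]
        rw [add_assoc, ← AddCircle.coe_add]
        congr 2
        push_cast
        ring
      · refine ⟨m + 1, ?_⟩
        simp only [Fin.isValue, hhalf]
        rw [add_assoc, ← add_assoc (((n : ℝ) * β 0 + m / 2 : ℝ) : AddCircle (1:ℝ)),
          ← AddCircle.coe_add, add_assoc, ← AddCircle.coe_add]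
        congr 2
        push_cast
        ring
  obtain ⟨m, hm⟩ := horb N
  -- dist at time N
  have h0dist : ‖y 0‖ ≤ 1/16 := by
    have := hy 0
    have hx0 : x 0 = 0 := by simp [hx]
    rwa [hx0, dist_eq_norm, zero_sub, norm_neg] at this
  have hNdist := hy N
  -- x N = coe (N β0 + 1/4)
  have hxN : x N = ((N * β 0 + 1/4 : ℝ) : AddCircle (1:ℝ)) := by
    have hNne : (N:ℝ) ≠ 0 := ne_of_gt hNpos
    have hr : (N:ℝ) * β 0 + (N:ℝ) / (4 * N) = (N:ℝ) * β 0 + 1/4 := by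
      field_simp
    simp only [hx]
    exact congrArg _ hr
  -- key norm computation
  have hkey : ‖((1/4 - m / 2 : ℝ) : AddCircle (1:ℝ))‖ = 1/4 := by
    rcases Nat.even_or_odd m with ⟨k, hk⟩ | ⟨k, hk⟩
    · have : ((1/4 - m / 2 : ℝ) : AddCircle (1:ℝ))
          = ((1/4 : ℝ) : AddCircle (1:ℝ)) + (((-k : ℤ) : ℝ) : AddCircle (1:ℝ)) := by
        rw [← AddCircle.coe_add]; congr 1; rw [hk]; push_cast; ring
      rw [this, intCast_coe_addCircle, add_zero, norm_quarter]
    · have : ((1/4 - m / 2 : ℝ) : AddCircle (1:ℝ))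
          = ((-(1/4) : ℝ) : AddCircle (1:ℝ)) + (((-k : ℤ) : ℝ) : AddCircle (1:ℝ)) := by
        rw [← AddCircle.coe_add]; congr 1; rw [hk]; push_cast; ring
      rw [this, intCast_coe_addCircle, add_zero, norm_neg_quarter]
  have hdiff : x N - y N = ((1/4 - m / 2 : ℝ) : AddCircle (1:ℝ)) - y 0 := by
    rw [hxN, hm]
    have hsub : ((N * β 0 + 1/4 : ℝ) : AddCircle (1:ℝ)) - ((N * β 0 + m / 2 : ℝ) : AddCircle (1:ℝ))
        = ((1/4 - m / 2 : ℝ) : AddCircle (1:ℝ)) := by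
      rw [← AddCircle.coe_sub]; congr 1; ring
    calc ((N * β 0 + 1/4 : ℝ) : AddCircle (1:ℝ)) - (y 0 + ((N * β 0 + m / 2 : ℝ) : AddCircle (1:ℝ)))
        = (((N * β 0 + 1/4 : ℝ) : AddCircle (1:ℝ)) - ((N * β 0 + m / 2 : ℝ) : AddCircle (1:ℝ))) - y 0 := by abel
      _ = ((1/4 - m / 2 : ℝ) : AddCircle (1:ℝ)) - y 0 := by rw [hsub]
  have : (3:ℝ)/16 ≤ dist (x N) (y N) := by
    rw [dist_eq_norm, hdiff]
    have h1 := norm_sub_norm_le (((1/4 - m / 2 : ℝ) : AddCircle (1:ℝ))) (y 0)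
    rw [hkey] at h1
    linarith
  linarith
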